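/- The pairwise identity-by-state probabilities {φ_ij}_{i,j=1}^N are uniquely determined by the conditions: φ_ii = 1 for every i, and, for every i ≠ j, φ_ij = u²·(1/n)·Σ_{(R,α) : |{i,j}∩R| = 2} p°_{(R,α)} + u·(1/n)·Σ_{(R,α) : |{i,j}∩R| = 1} p°_{(R,α)} + 2u(1−u)·(1/n)·Σ_{(R,α) : |{i,j}∩R| = 2} p°_{(R,α)} + Σ_{(R,α)} p°_{(R,α)}·(1−u)^{|{i,j}∩R|}·φ_{α̃(i)α̃(j)}. In particular, φ as defined from π° satisfies these equations, and they have no other solution. -/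

import Mathlib

open Finset

namespace SCT

abbrev Event (N : ℕ) := Finset (Fin N) × (Fin N → Fin N)

/-- The extension `α̃` of the parentage map of a replacement event:
it equals `α` on `R` and the identity off `R`. -/
def extMap {N : ℕ} (E : Event N) : Fin N → Fin N :=
  fun i => if i ∈ E.1 then E.2 i else i

/-- Transition probabilities of the mutation–selection Markov chain on states
`Fin N → Fin n`, for a replacement rule `p` and mutation probability `u`. -/
noncomputable def transMat (N n : ℕ) (p : Event N → ℝ) (u : ℝ)
    (x y : Fin N → Fin n) : ℝ :=
  ∑ E : Event N, p E *
    (∏ i ∈ E.1, ((1 - u) * (if y i = x (E.2 i) then (1:ℝ) else 0) + u / (n:ℝ))) *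
    (∏ i ∈ E.1ᶜ, (if y i = x i then (1:ℝ) else 0))

def IsDist {α : Type*} [Fintype α] (q : α → ℝ) : Prop :=
  (∀ a, 0 ≤ q a) ∧ ∑ a, q a = 1

def IsStationary {N n : ℕ} (P : (Fin N → Fin n) → (Fin N → Fin n) → ℝ)
    (π : (Fin N → Fin n) → ℝ) : Prop :=
  IsDist π ∧ ∀ y, ∑ x, π x * P x y = π y

/-- Fixation axiom: some site `i` can propagate its lineage through the whole
population via finitely many replacement events of positive probability. -/
def FixationAxiom {N : ℕ} (p : Event N → ℝ) : Prop :=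
  ∃ (i : Fin N) (m : ℕ) (E : Fin m → Event N), 1 ≤ m ∧
    (∀ k, 0 < p (E k)) ∧ (∃ k, i ∈ (E k).1) ∧
    ∀ j, ((List.ofFn (fun k => extMap (E k))).foldr (· ∘ ·) id) j = i

/-- Pairwise identity-by-state probability under the distribution `π`. -/
noncomputable def phi2 {N n : ℕ} (π : (Fin N → Fin n) → ℝ) (i j : Fin N) : ℝ :=
  ∑ x, π x * (if x i = x j then (1:ℝ) else 0)

/-- Triple identity-by-state probability under the distribution `π`. -/
noncomputable def phi3 {N n : ℕ} (π : (Fin N → Fin n) → ℝ) (i j k : Fin N) : ℝ :=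
  ∑ x, π x * (if x i = x j ∧ x j = x k then (1:ℝ) else 0)

lemma sum_delta' {n : ℕ} (a : Fin n) : ∑ v : Fin n, (if v = a then (1:ℝ) else 0) = 1 := by
  simp

lemma delta_mul_sum' {n : ℕ} (a b : Fin n) :
    ∑ c : Fin n, (if c = a then (1:ℝ) else 0) * (if c = b then 1 else 0)
      = if a = b then 1 else 0 := by
  have h : ∀ c : Fin n, (if c = a then (1:ℝ) else 0) * (if c = b then 1 else 0)
      = if c = a then (if a = b then (1:ℝ) else 0) else 0 := by
    intro c
    split_ifs with h1 h2 h3 h4 h5 h6 h7 <;> norm_num <;> subst_vars <;> tauto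
  rw [Finset.sum_congr rfl (fun c _ => h c), Finset.sum_ite_eq' univ a]
  simp

lemma sum_prod_affine {n : ℕ} (hn : 1 ≤ n) (t1 s1 t2 s2 : ℝ) (a b : Fin n) :
    ∑ c : Fin n, (t1 * (if c = a then (1:ℝ) else 0) + s1) * (t2 * (if c = b then (1:ℝ) else 0) + s2)
      = t1*t2*(if a = b then (1:ℝ) else 0) + t1*s2 + s1*t2 + n*(s1*s2) := by
  have h : ∀ c : Fin n, (t1 * (if c = a then (1:ℝ) else 0) + s1) * (t2 * (if c = b then (1:ℝ) else 0) + s2)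
      = t1*t2*((if c = a then (1:ℝ) else 0)*(if c = b then (1:ℝ) else 0))
        + t1*s2*(if c = a then (1:ℝ) else 0) + s1*t2*(if c = b then (1:ℝ) else 0) + s1*s2 :=
    fun c => by ring
  rw [Finset.sum_congr rfl (fun c _ => h c)]
  simp only [Finset.sum_add_distrib, ← Finset.mul_sum, delta_mul_sum', sum_delta',
    Finset.sum_const, card_univ, Fintype.card_fin, nsmul_eq_mul]
  ring

lemma delta_mul_sum2 {n : ℕ} (a b : Fin n) :
    ∑ c : Fin n, (if a = c then (1:ℝ) else 0) * (if b = c then 1 else 0)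
      = if a = b then 1 else 0 := by
  rw [← delta_mul_sum' a b]
  refine Finset.sum_congr rfl (fun c _ => ?_)
  simp [eq_comm]

lemma eventSum {N n : ℕ} (hn : 1 ≤ n) (u : ℝ) (E : Event N) (x : Fin N → Fin n)
    {i j : Fin N} (hij : i ≠ j) :
    ∑ y : Fin N → Fin n,
      (∏ k ∈ E.1, ((1 - u) * (if y k = x (E.2 k) then (1:ℝ) else 0) + u / (n:ℝ))) *
      (∏ k ∈ E.1ᶜ, (if y k = x k then (1:ℝ) else 0)) *
      (if y i = y j then (1:ℝ) else 0)
    = ∑ c : Fin n,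
        (if i ∈ E.1 then ((1-u) * (if c = x (E.2 i) then (1:ℝ) else 0) + u/(n:ℝ)) else (if c = x i then (1:ℝ) else 0)) *
        (if j ∈ E.1 then ((1-u) * (if c = x (E.2 j) then (1:ℝ) else 0) + u/(n:ℝ)) else (if c = x j then (1:ℝ) else 0)) := by
  classical
  have hn0 : (n:ℝ) ≠ 0 := Nat.cast_ne_zero.mpr (by omega)
  set g : Fin N → Fin n → ℝ := fun k v =>
    if k ∈ E.1 then ((1-u) * (if v = x (E.2 k) then (1:ℝ) else 0) + u/(n:ℝ))
    else (if v = x k then (1:ℝ) else 0) with hg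
  have sum_g : ∀ k, ∑ v : Fin n, g k v = 1 := by
    intro k
    by_cases hk : k ∈ E.1 <;> simp only [hg, hk, if_true, if_false]
    · rw [Finset.sum_add_distrib, ← Finset.mul_sum, sum_delta', Finset.sum_const,
        card_univ, Fintype.card_fin, nsmul_eq_mul]
      field_simp
      ring
    · exact sum_delta' _
  have hstep1 : ∀ y : Fin N → Fin n,
      (∏ k ∈ E.1, ((1 - u) * (if y k = x (E.2 k) then (1:ℝ) else 0) + u / (n:ℝ))) *
      (∏ k ∈ E.1ᶜ, (if y k = x k then (1:ℝ) else 0)) *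
      (if y i = y j then (1:ℝ) else 0)
      = ∑ c : Fin n, ∏ k : Fin N,
          (g k (y k) * ((if k = i then (if y k = c then (1:ℝ) else 0) else 1) *
                        (if k = j then (if y k = c then (1:ℝ) else 0) else 1))) := by
    intro y
    have hprod : (∏ k ∈ E.1, ((1 - u) * (if y k = x (E.2 k) then (1:ℝ) else 0) + u / (n:ℝ))) *
        (∏ k ∈ E.1ᶜ, (if y k = x k then (1:ℝ) else 0)) = ∏ k : Fin N, g k (y k) := by
      rw [← Finset.prod_mul_prod_compl E.1 (fun k => g k (y k))]
      congr 1
      · exact Finset.prod_congr rfl (fun k hk => by simp [hg, hk])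
      · exact Finset.prod_congr rfl (fun k hk => by simp [hg, (Finset.mem_compl.mp hk)])
    have hdelta : (if y i = y j then (1:ℝ) else 0)
        = ∑ c : Fin n, (if y i = c then (1:ℝ) else 0) * (if y j = c then 1 else 0) := by
      rw [delta_mul_sum2]
    rw [hprod, hdelta, Finset.mul_sum]
    refine Finset.sum_congr rfl (fun c _ => ?_)
    rw [Finset.prod_mul_distrib]
    congr 1
    rw [Finset.prod_mul_distrib]
    congr 1
    · rw [Finset.prod_ite_eq' univ i (fun k => if y k = c then (1:ℝ) else 0)]
      simp
    · rw [Finset.prod_ite_eq' univ j (fun k => if y k = c then (1:ℝ) else 0)]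
      simp
  rw [Finset.sum_congr rfl (fun y _ => hstep1 y), Finset.sum_comm]
  refine Finset.sum_congr rfl (fun c _ => ?_)
  rw [← Fintype.prod_sum (fun k (v : Fin n) =>
    (g k v * ((if k = i then (if v = c then (1:ℝ) else 0) else 1) *
              (if k = j then (if v = c then (1:ℝ) else 0) else 1))))]
  have hfac : ∀ k : Fin N, (∑ v : Fin n,
      g k v * ((if k = i then (if v = c then (1:ℝ) else 0) else 1) *
               (if k = j then (if v = c then (1:ℝ) else 0) else 1)))
      = if k = i then g i c else if k = j then g j c else 1 := by
    intro k
    by_cases hki : k = i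
    · subst hki
      have hv : ∀ v : Fin n,
          g k v * ((if k = k then (if v = c then (1:ℝ) else 0) else 1) *
                   (if k = j then (if v = c then (1:ℝ) else 0) else 1))
          = if v = c then g k c else 0 := by
        intro v; by_cases hvc : v = c <;> simp [hvc, hij]
      rw [Finset.sum_congr rfl (fun v _ => hv v), Finset.sum_ite_eq' univ c]
      simp [hij]
    · by_cases hkj : k = j
      · subst hkj
        have hv : ∀ v : Fin n,
            g k v * ((if k = i then (if v = c then (1:ℝ) else 0) else 1) *
                     (if k = k then (if v = c then (1:ℝ) else 0) else 1))
            = if v = c then g k c else 0 := by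
          intro v; by_cases hvc : v = c <;> simp [hvc, hki]
        rw [Finset.sum_congr rfl (fun v _ => hv v), Finset.sum_ite_eq' univ c]
        simp [hki]
      · simp only [if_neg hki, if_neg hkj, mul_one]
        exact sum_g k
  rw [Finset.prod_congr rfl (fun k _ => hfac k)]
  have hrest : ∀ k ∈ ({i, j} : Finset (Fin N))ᶜ,
      (if k = i then g i c else if k = j then g j c else 1) = 1 := by
    intro k hk
    simp only [Finset.mem_compl, Finset.mem_insert, Finset.mem_singleton] at hk
    push_neg at hk
    simp [hk.1, hk.2]
  rw [← Finset.prod_mul_prod_compl ({i, j} : Finset (Fin N)), Finset.prod_congr rfl hrest,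
    Finset.prod_const_one, mul_one, Finset.prod_pair hij]
  rw [if_pos rfl, if_neg (Ne.symm hij), if_pos rfl]
lemma card_pair_inter {N : ℕ} {i j : Fin N} (hij : i ≠ j) (R : Finset (Fin N)) :
    (({i, j} : Finset (Fin N)) ∩ R).card
      = (if i ∈ R then 1 else 0) + (if j ∈ R then 1 else 0) := by
  by_cases hi : i ∈ R <;> by_cases hj : j ∈ R
  · rw [Finset.inter_eq_left.mpr (by intro k hk; simp at hk; rcases hk with h|h <;> simp [h, hi, hj])]
    simp [Finset.card_pair hij, hi, hj]
  · have : ({i, j} : Finset (Fin N)) ∩ R = {i} := by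
      ext k
      simp only [Finset.mem_inter, Finset.mem_insert, Finset.mem_singleton]
      constructor
      · rintro ⟨rfl|rfl, hk⟩
        · rfl
        · exact absurd hk hj
      · rintro rfl; exact ⟨Or.inl rfl, hi⟩
    simp [this, hi, hj]
  · have : ({i, j} : Finset (Fin N)) ∩ R = {j} := by
      ext k
      simp only [Finset.mem_inter, Finset.mem_insert, Finset.mem_singleton]
      constructor
      · rintro ⟨rfl|rfl, hk⟩
        · exact absurd hk hi
        · rfl
      · rintro rfl; exact ⟨Or.inr rfl, hj⟩
    simp [this, hi, hj]
  · have : ({i, j} : Finset (Fin N)) ∩ R = ∅ := by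
      ext k
      simp only [Finset.mem_inter, Finset.mem_insert, Finset.mem_singleton, Finset.notMem_empty, iff_false]
      rintro ⟨rfl|rfl, hk⟩ <;> [exact hi hk; exact hj hk]
    simp [this, hi, hj]

lemma eventSum2 {N n : ℕ} (hn : 1 ≤ n) (u : ℝ) (E : Event N) (x : Fin N → Fin n)
    {i j : Fin N} (hij : i ≠ j) :
    ∑ c : Fin n,
        (if i ∈ E.1 then ((1-u) * (if c = x (E.2 i) then (1:ℝ) else 0) + u/(n:ℝ)) else (if c = x i then (1:ℝ) else 0)) *
        (if j ∈ E.1 then ((1-u) * (if c = x (E.2 j) then (1:ℝ) else 0) + u/(n:ℝ)) else (if c = x j then (1:ℝ) else 0))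
    = (1-u)^((({i, j} : Finset (Fin N)) ∩ E.1).card) *
        (if x (extMap E i) = x (extMap E j) then (1:ℝ) else 0)
      + (1 - (1-u)^((({i, j} : Finset (Fin N)) ∩ E.1).card))/(n:ℝ) := by
  have hn0 : (n:ℝ) ≠ 0 := Nat.cast_ne_zero.mpr (by omega)
  by_cases hi : i ∈ E.1 <;> by_cases hj : j ∈ E.1
  · have hc : (({i, j} : Finset (Fin N)) ∩ E.1).card = 2 := by
      rw [card_pair_inter hij]; simp [hi, hj]
    simp only [hi, hj, if_true, hc, extMap]
    rw [sum_prod_affine hn]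
    field_simp
    ring
  · have hc : (({i, j} : Finset (Fin N)) ∩ E.1).card = 1 := by
      rw [card_pair_inter hij]; simp [hi, hj]
    simp only [hi, hj, if_true, if_false, hc, extMap]
    have h2 : ∀ c : Fin n, ((1-u) * (if c = x (E.2 i) then (1:ℝ) else 0) + u/(n:ℝ)) *
        (if c = x j then (1:ℝ) else 0)
        = ((1-u) * (if c = x (E.2 i) then (1:ℝ) else 0) + u/(n:ℝ)) *
          (1 * (if c = x j then (1:ℝ) else 0) + 0) := fun c => by ring
    rw [Finset.sum_congr rfl (fun c _ => h2 c), sum_prod_affine hn]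
    field_simp
    ring
  · have hc : (({i, j} : Finset (Fin N)) ∩ E.1).card = 1 := by
      rw [card_pair_inter hij]; simp [hi, hj]
    simp only [hi, hj, if_true, if_false, hc, extMap]
    have h2 : ∀ c : Fin n, (if c = x i then (1:ℝ) else 0) *
        ((1-u) * (if c = x (E.2 j) then (1:ℝ) else 0) + u/(n:ℝ))
        = (1 * (if c = x i then (1:ℝ) else 0) + 0) *
          ((1-u) * (if c = x (E.2 j) then (1:ℝ) else 0) + u/(n:ℝ)) := fun c => by ring
    rw [Finset.sum_congr rfl (fun c _ => h2 c), sum_prod_affine hn]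
    field_simp
    ring
  · have hc : (({i, j} : Finset (Fin N)) ∩ E.1).card = 0 := by
      rw [card_pair_inter hij]; simp [hi, hj]
    simp only [hi, hj, if_false, hc, extMap]
    rw [delta_mul_sum']
    simp



lemma phi2_rec {N n : ℕ} (hn : 1 ≤ n) (p : Event N → ℝ) (u : ℝ)
    (π : (Fin N → Fin n) → ℝ) (hπ : IsStationary (transMat N n p u) π)
    {i j : Fin N} (hij : i ≠ j) :
    phi2 π i j = ∑ E : Event N, p E *
      ((1-u)^((({i, j} : Finset (Fin N)) ∩ E.1).card) * phi2 π (extMap E i) (extMap E j)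
        + (1 - (1-u)^((({i, j} : Finset (Fin N)) ∩ E.1).card))/(n:ℝ)) := by
  classical
  have hsum1 : ∑ x, π x = 1 := hπ.1.2
  have h1 : phi2 π i j
      = ∑ x, π x * (∑ y, transMat N n p u x y * (if y i = y j then (1:ℝ) else 0)) := by
    unfold phi2
    rw [Finset.sum_congr rfl (fun y _ => by rw [← hπ.2 y])]
    simp only [Finset.sum_mul]
    rw [Finset.sum_comm]
    simp only [Finset.mul_sum, mul_assoc]
  have h2 : ∀ x : Fin N → Fin n,
      (∑ y, transMat N n p u x y * (if y i = y j then (1:ℝ) else 0))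
      = ∑ E : Event N, p E *
        ((1-u)^((({i, j} : Finset (Fin N)) ∩ E.1).card) *
            (if x (extMap E i) = x (extMap E j) then (1:ℝ) else 0)
          + (1 - (1-u)^((({i, j} : Finset (Fin N)) ∩ E.1).card))/(n:ℝ)) := by
    intro x
    unfold transMat
    simp only [Finset.sum_mul]
    rw [Finset.sum_comm]
    refine Finset.sum_congr rfl (fun E _ => ?_)
    rw [← eventSum2 hn u E x hij, ← eventSum hn u E x hij, Finset.mul_sum]
    refine Finset.sum_congr rfl (fun y _ => ?_)
    ring
  rw [h1, Finset.sum_congr rfl (fun x _ => by rw [h2 x])]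
  simp only [Finset.mul_sum]
  rw [Finset.sum_comm]
  refine Finset.sum_congr rfl (fun E _ => ?_)
  have h3 : ∀ x : Fin N → Fin n, π x * (p E *
      ((1-u)^((({i, j} : Finset (Fin N)) ∩ E.1).card) *
          (if x (extMap E i) = x (extMap E j) then (1:ℝ) else 0)
        + (1 - (1-u)^((({i, j} : Finset (Fin N)) ∩ E.1).card))/(n:ℝ)))
      = p E * (1-u)^((({i, j} : Finset (Fin N)) ∩ E.1).card) *
          (π x * (if x (extMap E i) = x (extMap E j) then (1:ℝ) else 0))
        + p E * ((1 - (1-u)^((({i, j} : Finset (Fin N)) ∩ E.1).card))/(n:ℝ)) * π x :=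
    fun x => by ring
  rw [Finset.sum_congr rfl (fun x _ => h3 x), Finset.sum_add_distrib,
    ← Finset.mul_sum, ← Finset.mul_sum, hsum1]
  unfold phi2
  ring



lemma rhs_eq {N n : ℕ} (hn : 1 ≤ n) (p : Event N → ℝ) (u : ℝ) {i j : Fin N}
    (hij : i ≠ j) (f : Event N → ℝ) :
    u^2 * (1/(n:ℝ)) *
        (∑ E ∈ univ.filter
          (fun E : Event N => (({i, j} : Finset (Fin N)) ∩ E.1).card = 2), p E)
      + u * (1/(n:ℝ)) *
        (∑ E ∈ univ.filter
          (fun E : Event N => (({i, j} : Finset (Fin N)) ∩ E.1).card = 1), p E)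
      + 2 * u * (1-u) * (1/(n:ℝ)) *
        (∑ E ∈ univ.filter
          (fun E : Event N => (({i, j} : Finset (Fin N)) ∩ E.1).card = 2), p E)
      + ∑ E : Event N, p E * (1-u)^((({i, j} : Finset (Fin N)) ∩ E.1).card) * f E
    = ∑ E : Event N, p E *
        ((1-u)^((({i, j} : Finset (Fin N)) ∩ E.1).card) * f E
          + (1 - (1-u)^((({i, j} : Finset (Fin N)) ∩ E.1).card))/(n:ℝ)) := by
  classical
  have hn0 : (n:ℝ) ≠ 0 := Nat.cast_ne_zero.mpr (by omega)
  have hsplit : ∀ E : Event N, p E *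
      ((1-u)^((({i, j} : Finset (Fin N)) ∩ E.1).card) * f E
        + (1 - (1-u)^((({i, j} : Finset (Fin N)) ∩ E.1).card))/(n:ℝ))
      = p E * (1-u)^((({i, j} : Finset (Fin N)) ∩ E.1).card) * f E
        + ((if (({i, j} : Finset (Fin N)) ∩ E.1).card = 2 then
              (u^2 * (1/(n:ℝ)) + 2 * u * (1-u) * (1/(n:ℝ))) * p E else 0)
          + (if (({i, j} : Finset (Fin N)) ∩ E.1).card = 1 then
              (u * (1/(n:ℝ))) * p E else 0)) := by
    intro E
    have hc2 : (({i, j} : Finset (Fin N)) ∩ E.1).card ≤ 2 := by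
      calc (({i, j} : Finset (Fin N)) ∩ E.1).card
          ≤ ({i, j} : Finset (Fin N)).card := Finset.card_le_card Finset.inter_subset_left
        _ = 2 := Finset.card_pair hij
    set cE := (({i, j} : Finset (Fin N)) ∩ E.1).card with hce
    interval_cases cE
    · norm_num
    · norm_num; field_simp
    · norm_num; field_simp; ring
  rw [Finset.sum_congr rfl (fun E _ => hsplit E), Finset.sum_add_distrib,
    Finset.sum_add_distrib]
  rw [← Finset.sum_filter (fun E : Event N => (({i, j} : Finset (Fin N)) ∩ E.1).card = 2)
       (fun E => (u^2 * (1/(n:ℝ)) + 2 * u * (1-u) * (1/(n:ℝ))) * p E),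
      ← Finset.sum_filter (fun E : Event N => (({i, j} : Finset (Fin N)) ∩ E.1).card = 1)
       (fun E => (u * (1/(n:ℝ))) * p E),
      ← Finset.mul_sum, ← Finset.mul_sum]
  ring



lemma phi2_diag {N n : ℕ} (π : (Fin N → Fin n) → ℝ) (hπ : IsDist π) (i : Fin N) :
    phi2 π i i = 1 := by
  unfold phi2
  have h : ∀ x : Fin N → Fin n, π x * (if x i = x i then (1:ℝ) else 0) = π x := fun x => by simp
  rw [Finset.sum_congr rfl (fun x _ => h x)]
  exact hπ.2

lemma step_bound {N : ℕ} (p : Event N → ℝ) (hp : IsDist p) (u : ℝ)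
    (hu0 : 0 ≤ u) (hu1 : u ≤ 1)
    (d : Fin N → Fin N → ℝ) (D : ℝ) (hD0 : 0 ≤ D) (hDb : ∀ i j, |d i j| ≤ D)
    (hd0 : ∀ i, d i i = 0)
    (hrec : ∀ i j : Fin N, i ≠ j → d i j = ∑ E : Event N,
      p E * (1-u)^((({i, j} : Finset (Fin N)) ∩ E.1).card) * d (extMap E i) (extMap E j))
    (E0 : Event N) (hE0 : 0 < p E0) (i j : Fin N) :
    |d i j| ≤ (1 - p E0) * D + p E0 * |d (extMap E0 i) (extMap E0 j)| := by
  classical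
  have hpE0le : p E0 ≤ 1 := by
    have h := Finset.single_le_sum (f := p) (fun a _ => hp.1 a) (Finset.mem_univ E0)
    rwa [hp.2] at h
  by_cases hij : i = j
  · subst hij
    rw [hd0 i, abs_zero]
    have h1 : 0 ≤ (1 - p E0) * D := mul_nonneg (by linarith) hD0
    have h2 : 0 ≤ p E0 * |d (extMap E0 i) (extMap E0 i)| :=
      mul_nonneg (le_of_lt hE0) (abs_nonneg _)
    linarith
  · rw [hrec i j hij]
    calc |∑ E : Event N, p E * (1-u)^((({i, j} : Finset (Fin N)) ∩ E.1).card) *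
            d (extMap E i) (extMap E j)|
        ≤ ∑ E : Event N, |p E * (1-u)^((({i, j} : Finset (Fin N)) ∩ E.1).card) *
            d (extMap E i) (extMap E j)| := Finset.abs_sum_le_sum_abs _ _
      _ ≤ ∑ E : Event N, (if E = E0 then p E0 * |d (extMap E0 i) (extMap E0 j)| else p E * D) := by
          refine Finset.sum_le_sum (fun E _ => ?_)
          have h1u : 0 ≤ (1-u) := by linarith
          have hpow0 : 0 ≤ (1-u)^((({i, j} : Finset (Fin N)) ∩ E.1).card) := pow_nonneg h1u _
          have hpow1 : (1-u)^((({i, j} : Finset (Fin N)) ∩ E.1).card) ≤ 1 :=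
            pow_le_one₀ h1u (by linarith)
          rw [abs_mul, abs_mul, abs_of_nonneg (hp.1 E), abs_of_nonneg hpow0]
          by_cases hE : E = E0
          · subst hE
            have : (1-u)^((({i, j} : Finset (Fin N)) ∩ E.1).card) *
                |d (extMap E i) (extMap E j)| ≤ |d (extMap E i) (extMap E j)| := by
              nlinarith [abs_nonneg (d (extMap E i) (extMap E j))]
            rw [if_pos rfl, mul_assoc]
            exact mul_le_mul_of_nonneg_left this (hp.1 E)
          · rw [if_neg hE, mul_assoc]
            have : (1-u)^((({i, j} : Finset (Fin N)) ∩ E.1).card) *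
                |d (extMap E i) (extMap E j)| ≤ D := by
              nlinarith [abs_nonneg (d (extMap E i) (extMap E j)), hDb (extMap E i) (extMap E j)]
            exact mul_le_mul_of_nonneg_left this (hp.1 E)
      _ = (1 - p E0) * D + p E0 * |d (extMap E0 i) (extMap E0 j)| := by
          rw [← Finset.add_sum_erase _ _ (Finset.mem_univ E0), if_pos rfl]
          rw [Finset.sum_congr rfl (fun E hE => if_neg (Finset.ne_of_mem_erase hE))]
          have hsum : ∑ E ∈ Finset.univ.erase E0, p E = 1 - p E0 := by
            have h := Finset.add_sum_erase _ p (Finset.mem_univ E0)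
            rw [hp.2] at h
            linarith
          rw [← Finset.sum_mul, hsum]
          ring

lemma chain_bound {N : ℕ} (p : Event N → ℝ) (hp : IsDist p) (u : ℝ)
    (hu0 : 0 ≤ u) (hu1 : u ≤ 1)
    (d : Fin N → Fin N → ℝ) (D : ℝ) (hD0 : 0 ≤ D) (hDb : ∀ i j, |d i j| ≤ D)
    (hd0 : ∀ i, d i i = 0)
    (hrec : ∀ i j : Fin N, i ≠ j → d i j = ∑ E : Event N,
      p E * (1-u)^((({i, j} : Finset (Fin N)) ∩ E.1).card) * d (extMap E i) (extMap E j)) :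
    ∀ L : List (Event N), (∀ E ∈ L, 0 < p E) → ∀ i j : Fin N,
      |d i j| ≤ (1 - (L.map p).prod) * D
        + (L.map p).prod *
          |d (((L.map extMap).foldr (· ∘ ·) id) i) (((L.map extMap).foldr (· ∘ ·) id) j)| := by
  intro L
  induction L with
  | nil => intro _ i j; simp
  | cons E L ih =>
    intro hpos i j
    have hE : 0 < p E := hpos E List.mem_cons_self
    have hLpos : ∀ F ∈ L, 0 < p F := fun F hF => hpos F (List.mem_cons_of_mem E hF)
    have hq0 : 0 < (L.map p).prod := by
      apply List.prod_pos
      intro a ha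
      obtain ⟨F, hF, rfl⟩ := List.mem_map.mp ha
      exact hLpos F hF
    set F := ((L.map extMap).foldr (· ∘ ·) id) with hF
    have ih' := ih hLpos i j
    have hstep := step_bound p hp u hu0 hu1 d D hD0 hDb hd0 hrec E hE (F i) (F j)
    have hcomp : (((E :: L).map extMap).foldr (· ∘ ·) id) = extMap E ∘ F := by
      simp [hF]
    calc |d i j| ≤ (1 - (L.map p).prod) * D + (L.map p).prod * |d (F i) (F j)| := ih'
      _ ≤ (1 - (L.map p).prod) * D + (L.map p).prod *
            ((1 - p E) * D + p E * |d (extMap E (F i)) (extMap E (F j))|) := by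
          exact add_le_add_right (mul_le_mul_of_nonneg_left hstep (le_of_lt hq0)) _
      _ = (1 - ((E :: L).map p).prod) * D + ((E :: L).map p).prod *
            |d ((((E :: L).map extMap).foldr (· ∘ ·) id) i)
               ((((E :: L).map extMap).foldr (· ∘ ·) id) j)| := by
          rw [hcomp]
          simp only [List.map_cons, List.prod_cons, Function.comp_apply]
          ring

lemma d_eq_zero {N : ℕ} (hN : 1 ≤ N) (p : Event N → ℝ) (hp : IsDist p)
    (hfix : FixationAxiom p) (u : ℝ) (hu0 : 0 ≤ u) (hu1 : u ≤ 1)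
    (d : Fin N → Fin N → ℝ)
    (hd0 : ∀ i, d i i = 0)
    (hrec : ∀ i j : Fin N, i ≠ j → d i j = ∑ E : Event N,
      p E * (1-u)^((({i, j} : Finset (Fin N)) ∩ E.1).card) * d (extMap E i) (extMap E j)) :
    ∀ i j, d i j = 0 := by
  classical
  haveI : Nonempty (Fin N) := ⟨⟨0, hN⟩⟩
  obtain ⟨i0, m, Es, hm, hpos, _, hall⟩ := hfix
  set L : List (Event N) := List.ofFn Es with hL
  have hLpos : ∀ E ∈ L, 0 < p E := by
    intro E hE
    rw [hL, List.mem_ofFn] at hE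
    obtain ⟨k, rfl⟩ := hE
    exact hpos k
  have hmap : L.map extMap = List.ofFn (fun k => extMap (Es k)) := by
    rw [hL, List.map_ofFn]
    rfl
  have hcomp : ∀ j : Fin N, ((L.map extMap).foldr (· ∘ ·) id) j = i0 := by
    intro j
    rw [hmap]
    exact hall j
  have hq0 : 0 < (L.map p).prod := by
    apply List.prod_pos
    intro a ha
    obtain ⟨F, hF, rfl⟩ := List.mem_map.mp ha
    exact hLpos F hF
  obtain ⟨q0, _, hmax⟩ := Finset.exists_max_image (Finset.univ : Finset (Fin N × Fin N))
    (fun q => |d q.1 q.2|) Finset.univ_nonempty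
  set D := |d q0.1 q0.2| with hD
  have hD0 : 0 ≤ D := abs_nonneg _
  have hDb : ∀ i j, |d i j| ≤ D := fun i j => hmax (i, j) (Finset.mem_univ _)
  have hkey := chain_bound p hp u hu0 hu1 d D hD0 hDb hd0 hrec L hLpos q0.1 q0.2
  rw [hcomp q0.1, hcomp q0.2, hd0 i0, abs_zero, mul_zero, add_zero] at hkey
  have hDzero : D = 0 := by nlinarith
  intro i j
  have := hDb i j
  rw [hDzero] at this
  exact abs_eq_zero.mp (le_antisymm this (abs_nonneg _))


/-- The pairwise identity-by-state probabilities under the unique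
neutral stationary distribution are the unique solution of the given recurrence. -/
theorem stmt1 {N n : ℕ} (hN : 1 ≤ N) (hn : 1 ≤ n)
    (p : Event N → ℝ) (hp : IsDist p) (hfix : FixationAxiom p)
    (u : ℝ) (hu0 : 0 < u) (hu1 : u ≤ 1)
    (π : (Fin N → Fin n) → ℝ)
    (hπ : IsStationary (transMat N n p u) π)
    (huniq : ∀ π', IsStationary (transMat N n p u) π' → π' = π) :
    ∀ ψ : Fin N → Fin N → ℝ,
      ((∀ i, ψ i i = 1) ∧
        (∀ i j : Fin N, i ≠ j →
          ψ i j =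
            u^2 * (1/(n:ℝ)) *
              (∑ E ∈ univ.filter
                (fun E : Event N => (({i, j} : Finset (Fin N)) ∩ E.1).card = 2), p E)
            + u * (1/(n:ℝ)) *
              (∑ E ∈ univ.filter
                (fun E : Event N => (({i, j} : Finset (Fin N)) ∩ E.1).card = 1), p E)
            + 2 * u * (1-u) * (1/(n:ℝ)) *
              (∑ E ∈ univ.filter
                (fun E : Event N => (({i, j} : Finset (Fin N)) ∩ E.1).card = 2), p E)
            + ∑ E : Event N,
                p E * (1-u)^((({i, j} : Finset (Fin N)) ∩ E.1).card) *
                  ψ (extMap E i) (extMap E j)))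
      ↔ ψ = fun i j => phi2 π i j := by
  intro ψ
  constructor
  · rintro ⟨hdiag, hrec⟩
    have hphidiag : ∀ i : Fin N, phi2 π i i = 1 := phi2_diag π hπ.1
    set d : Fin N → Fin N → ℝ := fun a b => ψ a b - phi2 π a b with hd
    have hd0 : ∀ a, d a a = 0 := fun a => by simp [hd, hdiag a, hphidiag a]
    have hdrec : ∀ a b : Fin N, a ≠ b → d a b = ∑ E : Event N,
        p E * (1-u)^((({a, b} : Finset (Fin N)) ∩ E.1).card) * d (extMap E a) (extMap E b) := by
      intro a b hab
      have h1 := hrec a b hab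
      have h2 : phi2 π a b =
          u^2 * (1/(n:ℝ)) *
            (∑ E ∈ univ.filter
              (fun E : Event N => (({a, b} : Finset (Fin N)) ∩ E.1).card = 2), p E)
          + u * (1/(n:ℝ)) *
            (∑ E ∈ univ.filter
              (fun E : Event N => (({a, b} : Finset (Fin N)) ∩ E.1).card = 1), p E)
          + 2 * u * (1-u) * (1/(n:ℝ)) *
            (∑ E ∈ univ.filter
              (fun E : Event N => (({a, b} : Finset (Fin N)) ∩ E.1).card = 2), p E)
          + ∑ E : Event N,
              p E * (1-u)^((({a, b} : Finset (Fin N)) ∩ E.1).card) *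
                phi2 π (extMap E a) (extMap E b) := by
        rw [rhs_eq hn p u hab (fun E => phi2 π (extMap E a) (extMap E b))]
        exact phi2_rec hn p u π hπ hab
      have h3 : ∑ E : Event N,
          p E * (1-u)^((({a, b} : Finset (Fin N)) ∩ E.1).card) *
            (ψ (extMap E a) (extMap E b) - phi2 π (extMap E a) (extMap E b))
          = (∑ E : Event N, p E * (1-u)^((({a, b} : Finset (Fin N)) ∩ E.1).card) *
              ψ (extMap E a) (extMap E b))
            - ∑ E : Event N, p E * (1-u)^((({a, b} : Finset (Fin N)) ∩ E.1).card) *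
              phi2 π (extMap E a) (extMap E b) := by
        rw [← Finset.sum_sub_distrib]
        exact Finset.sum_congr rfl (fun E _ => by ring)
      simp only [hd]
      rw [h3, h1, h2]
      ring
    have hzero := d_eq_zero hN p hp hfix u (le_of_lt hu0) hu1 d hd0 hdrec
    funext i j
    have h := hzero i j
    show ψ i j = phi2 π i j
    have : ψ i j - phi2 π i j = 0 := h
    linarith
  · rintro rfl
    refine ⟨fun i => phi2_diag π hπ.1 i, fun i j hij => ?_⟩
    show phi2 π i j = _
    rw [rhs_eq hn p u hij (fun E => phi2 π (extMap E i) (extMap E j))]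
    exact phi2_rec hn p u π hπ hij

end SCT
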